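/- For the bypass triangle structure: in the homotopy category over F_2, given chain maps F(β): F(Γ) → F(Γ'), F(β'): F(Γ') → F(Γ''), and module maps F(γ), F(γ'), F(γ'') satisfying F(γ)∘F(β) + F(β'')∘F(γ'') = id, F(γ')∘F(β') + F(β)∘F(γ) = id, F(γ'')∘F(β'') + F(β')∘F(γ') = id, and F(β')∘F(β) = d∘F(γ'') + F(γ'')∘d (null-homotopic), then Cone(F(β)) is homotopy equivalent to F(Γ'') via the maps η = F(γ'') ⊕ F(β') and ε = F(β'') + F(γ'). -/

import Mathlib

/-- Proposition 7.3, abstract homological-algebra version over `F₂` (ungraded chain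
complexes as modules with a square-zero differential): given chain maps
`β : A → B`, `β' : B → C`, `β'' : C → A` and module maps `γ, γ', γ''` satisfying the
three splitting identities, with `β'∘β`, `β''∘β'`, `β∘β''` null-homotopic via
`γ''`, `γ`, `γ'` respectively (and `γ'∘γ'' = 0`, as holds by construction), the
mapping cone of `β` is chain homotopy equivalent to `C` via
`η = γ'' ⊕ β'` and `ε = β'' + γ'`. -/
theorem stmt17
    (A B C : Type*) [AddCommGroup A] [AddCommGroup B] [AddCommGroup C]
    [Module (ZMod 2) A] [Module (ZMod 2) B] [Module (ZMod 2) C]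
    (dA : A →ₗ[ZMod 2] A) (dB : B →ₗ[ZMod 2] B) (dC : C →ₗ[ZMod 2] C)
    (hdA : dA ∘ₗ dA = 0) (hdB : dB ∘ₗ dB = 0) (hdC : dC ∘ₗ dC = 0)
    (β : A →ₗ[ZMod 2] B) (β' : B →ₗ[ZMod 2] C) (β'' : C →ₗ[ZMod 2] A)
    (hβ : dB ∘ₗ β = β ∘ₗ dA) (hβ' : dC ∘ₗ β' = β' ∘ₗ dB) (hβ'' : dA ∘ₗ β'' = β'' ∘ₗ dC)
    (γ : B →ₗ[ZMod 2] A) (γ' : C →ₗ[ZMod 2] B) (γ'' : A →ₗ[ZMod 2] C)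
    (h1 : γ ∘ₗ β + β'' ∘ₗ γ'' = LinearMap.id)
    (h2 : γ' ∘ₗ β' + β ∘ₗ γ = LinearMap.id)
    (h3 : γ'' ∘ₗ β'' + β' ∘ₗ γ' = LinearMap.id)
    (h4 : β' ∘ₗ β = dC ∘ₗ γ'' + γ'' ∘ₗ dA)
    (h5 : β'' ∘ₗ β' = dA ∘ₗ γ + γ ∘ₗ dB)
    (h6 : β ∘ₗ β'' = dB ∘ₗ γ' + γ' ∘ₗ dC)
    (h7 : γ' ∘ₗ γ'' = 0) :
    ∀ Dcone : A × B →ₗ[ZMod 2] A × B,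
      Dcone = LinearMap.prod (dA ∘ₗ LinearMap.fst (ZMod 2) A B)
          (β ∘ₗ LinearMap.fst (ZMod 2) A B + dB ∘ₗ LinearMap.snd (ZMod 2) A B) →
    ∀ η : A × B →ₗ[ZMod 2] C,
      η = γ'' ∘ₗ LinearMap.fst (ZMod 2) A B + β' ∘ₗ LinearMap.snd (ZMod 2) A B →
    ∀ ε : C →ₗ[ZMod 2] A × B, ε = LinearMap.prod β'' γ' →
      (dC ∘ₗ η = η ∘ₗ Dcone) ∧ (Dcone ∘ₗ ε = ε ∘ₗ dC) ∧
      (∃ h₁ : C →ₗ[ZMod 2] C, η ∘ₗ ε = LinearMap.id + dC ∘ₗ h₁ + h₁ ∘ₗ dC) ∧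
      (∃ h₂ : A × B →ₗ[ZMod 2] A × B,
        ε ∘ₗ η = LinearMap.id + Dcone ∘ₗ h₂ + h₂ ∘ₗ Dcone) := by
  intro Dcone hD η hη ε hε
  subst hD hη hε
  have two2 : (2 : ZMod 2) = 0 := rfl
  have twoA : ∀ x : A, x + x = 0 := fun x => by
    rw [← two_smul (ZMod 2) x, two2, zero_smul]
  have twoB : ∀ x : B, x + x = 0 := fun x => by
    rw [← two_smul (ZMod 2) x, two2, zero_smul]
  have twoC : ∀ x : C, x + x = 0 := fun x => by
    rw [← two_smul (ZMod 2) x, two2, zero_smul]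
  have H1 := fun x => congrFun (congrArg DFunLike.coe h1) x
  have H2 := fun x => congrFun (congrArg DFunLike.coe h2) x
  have H3 := fun x => congrFun (congrArg DFunLike.coe h3) x
  have H4 := fun x => congrFun (congrArg DFunLike.coe h4) x
  have H5 := fun x => congrFun (congrArg DFunLike.coe h5) x
  have H6 := fun x => congrFun (congrArg DFunLike.coe h6) x
  have H7 := fun x => congrFun (congrArg DFunLike.coe h7) x
  have Hb' := fun x => congrFun (congrArg DFunLike.coe hβ') x
  have Hb'' := fun x => congrFun (congrArg DFunLike.coe hβ'') x
  simp only [LinearMap.comp_apply, LinearMap.add_apply, LinearMap.id_apply,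
    LinearMap.zero_apply] at H1 H2 H3 H4 H5 H6 H7 Hb' Hb''
  refine ⟨?_, ?_, ⟨0, ?_⟩, ⟨LinearMap.prod (γ ∘ₗ LinearMap.snd (ZMod 2) A B) 0, ?_⟩⟩
  · apply LinearMap.ext; rintro ⟨a, b⟩
    simp only [LinearMap.comp_apply, LinearMap.add_apply, LinearMap.prod_apply, Function.prod,
      LinearMap.fst_apply, LinearMap.snd_apply, map_add]
    rw [H4 a, Hb' b]
    abel_nf
    simp [two_smul, two_nsmul, two_zsmul, twoA, twoB, twoC]
  · apply LinearMap.ext; intro c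
    simp only [LinearMap.comp_apply, LinearMap.add_apply, LinearMap.prod_apply, Function.prod,
      LinearMap.fst_apply, LinearMap.snd_apply]
    refine Prod.ext (Hb'' c) ?_
    rw [H6 c]
    abel_nf
    simp [two_smul, two_nsmul, two_zsmul, twoA, twoB, twoC]
  · apply LinearMap.ext; intro c
    simp only [LinearMap.comp_apply, LinearMap.add_apply, LinearMap.prod_apply, Function.prod,
      LinearMap.fst_apply, LinearMap.snd_apply, LinearMap.id_apply, LinearMap.zero_apply,
      map_zero, add_zero, LinearMap.comp_zero, LinearMap.zero_comp]
    exact H3 c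
  · apply LinearMap.ext; rintro ⟨a, b⟩
    simp only [LinearMap.comp_apply, LinearMap.add_apply, LinearMap.prod_apply, Function.prod,
      LinearMap.fst_apply, LinearMap.snd_apply, LinearMap.id_apply, LinearMap.zero_apply,
      map_add, map_zero, add_zero, Prod.mk_add_mk]
    refine Prod.ext ?_ ?_
    · simp only [Prod.fst_add]
      have e1 : β'' (γ'' a) = a + γ (β a) :=
        calc β'' (γ'' a) = (γ (β a) + β'' (γ'' a)) + γ (β a) := by
              rw [add_comm (γ (β a)) (β'' (γ'' a)), add_assoc, twoA, add_zero]
        _ = a + γ (β a) := by rw [H1 a]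
      rw [H5 b, e1]
      abel
    · simp only [Prod.snd_add]
      have e2 : γ' (β' b) = b + β (γ b) :=
        calc γ' (β' b) = (γ' (β' b) + β (γ b)) + β (γ b) := by
              rw [add_assoc, twoB, add_zero]
        _ = b + β (γ b) := by rw [H2 b]
      rw [H7 a, zero_add, e2]
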